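/- Let γ: ℙ₁ × ℙ₂ → ℙ̄ be a regular embedding, let g ∈ 𝒢₁, and let P₁*, P₂* be distinct points of 𝒫₂; set g_i := (g × {P_i*})γ for i = 1, 2 (these are lines of ℙ̄). Then the mapping f: g₁ → g₂ determined by (P, P₁*)γ f := (P, P₂*)γ for every P ∈ g is a projectivity. -/

import Mathlib

open Set

namespace Segre

variable {P Q : Type*}

/-- Two points are collinear w.r.t. a line set `L` if some line contains both. -/
def Collin (L : Set (Set P)) (x y : P) : Prop := ∃ g ∈ L, x ∈ g ∧ y ∈ g

/-- The union of all lines of `L` through both `x` and `y`; for distinct collinear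
points of a semilinear space this is the unique line `xy`. -/
def lineThru (L : Set (Set P)) (x y : P) : Set P := ⋃ g ∈ {g ∈ L | x ∈ g ∧ y ∈ g}, g

/-- The join `M₁ ∨ M₂` of two point sets in a (semi)linear space with line set `L`. -/
def sJoin (L : Set (Set P)) (M₁ M₂ : Set P) : Set P :=
  M₁ ∪ M₂ ∪
    ⋃ (x ∈ M₁) (y ∈ M₂) (_ : x ≠ y ∧ Collin L x y), lineThru L x y

/-- The (possibly empty) image point set `Xχ` of a single point under a partial map. -/
def ptImg (χ : P → Option Q) (X : P) : Set Q := {y | χ X = some y}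

/-- The image `Mχ` of a point set under a partial map. -/
def mapSet (χ : P → Option Q) (M : Set P) : Set Q := ⋃ X ∈ M, ptImg χ X

/-- Axioms (L1) and (L2) for a linear map from the semilinear space with point set `P`
and line set `L` into the projective space with point set `Q` and line set `L'`.
Points in the exceptional set are modelled by the value `none`. -/
def IsLinMap (L : Set (Set P)) (L' : Set (Set Q)) (χ : P → Option Q) : Prop :=
  (∀ X Y : P, Collin L X Y →
      mapSet χ (sJoin L {X} {Y}) = sJoin L' (ptImg χ X) (ptImg χ Y)) ∧
  (∀ X Y : P, Collin L X Y → X ≠ Y → ptImg χ X = ptImg χ Y →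
      ∃ Z ∈ lineThru L X Y, χ Z = none)

/-- A linear map is global if its domain is everything. -/
def IsGlobal (χ : P → Option Q) : Prop := ∀ X, χ X ≠ none

/-- The lines of the product of two semilinear spaces with line sets `L₁`, `L₂`. -/
def prodLines (L₁ : Set (Set P)) (L₂ : Set (Set Q)) : Set (Set (P × Q)) :=
  {s | (∃ X₁ : P, ∃ g₂ ∈ L₂, s = {X₁} ×ˢ g₂) ∨ ∃ g₁ ∈ L₁, ∃ X₂ : Q, s = g₁ ×ˢ {X₂}}

/-- The lines of the product of two lines `ℓ₁`, `ℓ₂` (viewed as semilinear spaces). -/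
def lineProdLines (ℓ₁ : Set P) (ℓ₂ : Set Q) : Set (Set (P × Q)) :=
  {s | (∃ X ∈ ℓ₁, s = {X} ×ˢ ℓ₂) ∨ ∃ Y ∈ ℓ₂, s = ℓ₁ ×ˢ {Y}}

/-- A collineation of a projective (or semilinear) space with line set `L`:
a bijection such that it and its inverse map lines onto lines. -/
def IsCollineation (L : Set (Set P)) (α : P → P) : Prop :=
  Function.Bijective α ∧ ∀ g : Set P, g ∈ L ↔ α '' g ∈ L

section Projective

variable {K V : Type*} [Field K] [AddCommGroup V] [Module K V]

/-- The point set of the projective line through two (distinct) points of a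
projective space `ℙ K V`. -/
def projLineThrough (x y : Projectivization K V) : Set (Projectivization K V) :=
  {z | z.submodule ≤ x.submodule ⊔ y.submodule}

/-- The lines of the projective space `ℙ K V`. -/
def projLines (K V : Type*) [Field K] [AddCommGroup V] [Module K V] :
    Set (Set (Projectivization K V)) :=
  {g | ∃ x y : Projectivization K V, x ≠ y ∧ g = projLineThrough x y}

/-- The linear span of (representatives of) a set of projective points; its projective
space is the projective closure of the set, whose projective dimension is the vector
rank of this span minus one. -/
def spanOf (M : Set (Projectivization K V)) : Submodule K V := ⨆ x ∈ M, x.submodule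

/-- `E` is the point set of a plane (projective dimension 2). -/
def IsPlane (E : Set (Projectivization K V)) : Prop :=
  ∃ W : Submodule K V, Module.finrank K ↥W = 3 ∧ E = {x | x.submodule ≤ W}

/-- The family of points `A` is a projective basis of the subspace of `ℙ K V`
corresponding to the submodule `W`: the representatives are linearly independent and
span `W`. -/
def IsProjBasisOf {ι : Type*} (A : ι → Projectivization K V) (W : Submodule K V) : Prop :=
  iSupIndep (fun i => (A i).submodule) ∧ (⨆ i, (A i).submodule) = W

end Projective

section PG

variable (F : Type*) [Field F]

/-- The point set of `PG(k, F)`. -/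
abbrev PGPt (k : ℕ) := Projectivization F (Fin (k + 1) → F)

/-- The line set of `PG(k, F)`. -/
abbrev PGLines (k : ℕ) := projLines F (Fin (k + 1) → F)

variable (n m : ℕ)

/-- A regular embedding `γ : ℙ₁ × ℙ₂ → ℙ̄`, where `ℙ₁ = PG(n,F)`, `ℙ₂ = PG(m,F)` and
`ℙ̄ = PG(nm+n+m, F)`: a global injective linear map of the product such that the
projective closure of the image has (projective) dimension `nm+n+m`. -/
def IsRegularEmbedding (γ : PGPt F n × PGPt F m → PGPt F (n * m + n + m)) : Prop :=
  IsLinMap (prodLines (PGLines F n) (PGLines F m)) (PGLines F (n * m + n + m))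
      (fun p => some (γ p)) ∧
  Function.Injective γ ∧
  Module.finrank F ↥(spanOf (Set.range γ)) = n * m + n + m + 1

variable {K W : Type*} [Field K] [AddCommGroup W] [Module K W]

/-- Condition (i) on `χ`, w.r.t. the basis `B` of `ℙ₂` and the plane `E ⊆ 𝒫₁`:
for every `i = 1, …, m` the restriction of `χ` to `E × {B 0, B i}` is global and
of rank greater than `2` (i.e. the vector rank of the span of its image exceeds `3`). -/
def CondI (χ : PGPt F n × PGPt F m → Option (Projectivization K W))
    (B : Fin (m + 1) → PGPt F m) (E : Set (PGPt F n)) : Prop :=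
  IsProjBasisOf B (⊤ : Submodule F (Fin (m + 1) → F)) ∧ IsPlane E ∧
  ∀ i : Fin (m + 1), i ≠ 0 →
    (∀ p ∈ E ×ˢ ({B 0, B i} : Set (PGPt F m)), χ p ≠ none) ∧
    3 < Module.rank K ↥(spanOf (mapSet χ (E ×ˢ ({B 0, B i} : Set (PGPt F m)))))

/-- Condition (ii) on `χ`, w.r.t. the point `A ∈ 𝒫₁`: the image `({A} × 𝒫₂)χ` has
projective dimension `m` (i.e. the vector rank of the span of the image is `m + 1`). -/
def CondII (χ : PGPt F n × PGPt F m → Option (Projectivization K W))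
    (A : PGPt F n) : Prop :=
  Module.rank K ↥(spanOf (mapSet χ (({A} : Set (PGPt F n)) ×ˢ (univ : Set (PGPt F m)))))
    = (m : Cardinal) + 1

/-- `ℓ₂` is a special line for the data `χ, γ, φ, α'`: it is a line of `ℙ₂` such that
(a) `({X} × ℓ₂)γφ = ({X} × ℓ₂)αχ` for every `X ∈ 𝒫₁`, and (b) the rank of `αχ`
restricted to `𝒫₁ × ℓ₂` is greater than `1` (vector rank of the span `> 2`). -/
def SpecialLine (χ : PGPt F n × PGPt F m → Option (Projectivization K W))
    (γ : PGPt F n × PGPt F m → PGPt F (n * m + n + m))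
    (φ : PGPt F (n * m + n + m) → Option (Projectivization K W))
    (α' : PGPt F m → PGPt F m) (ℓ₂ : Set (PGPt F m)) : Prop :=
  ℓ₂ ∈ PGLines F m ∧
  (∀ X : PGPt F n,
    mapSet (fun p => φ (γ p)) (({X} : Set (PGPt F n)) ×ˢ ℓ₂) =
      mapSet (fun p : PGPt F n × PGPt F m => χ (p.1, α' p.2))
        (({X} : Set (PGPt F n)) ×ˢ ℓ₂)) ∧
  2 < Module.rank K ↥(spanOf (mapSet (fun p : PGPt F n × PGPt F m => χ (p.1, α' p.2))
        ((univ : Set (PGPt F n)) ×ˢ ℓ₂)))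

end PG

end Segre

namespace Segre

section Helpers

open Module

variable {P Q : Type*}

section Projective2

variable {K V : Type*} [Field K] [AddCommGroup V] [Module K V]

lemma mem_plt {x y z : Projectivization K V} :
    z ∈ projLineThrough x y ↔ z.submodule ≤ x.submodule ⊔ y.submodule := Iff.rfl

lemma left_mem_plt (x y : Projectivization K V) : x ∈ projLineThrough x y :=
  mem_plt.mpr le_sup_left

lemma right_mem_plt (x y : Projectivization K V) : y ∈ projLineThrough x y :=
  mem_plt.mpr le_sup_right

lemma spanOf_plt (x y : Projectivization K V) :
    spanOf (projLineThrough x y) = x.submodule ⊔ y.submodule := by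
  apply le_antisymm
  · exact iSup₂_le fun z hz => hz
  · exact sup_le (le_iSup₂_of_le x (left_mem_plt x y) le_rfl)
      (le_iSup₂_of_le y (right_mem_plt x y) le_rfl)

/-- If the submodule of one projective point is contained in that of another,
the points are equal. -/
lemma eq_of_submodule_le {x y : Projectivization K V} (h : x.submodule ≤ y.submodule) :
    x = y := by
  apply Projectivization.submodule_injective
  exact Submodule.eq_of_le_of_finrank_le h
    (by rw [x.finrank_submodule, y.finrank_submodule])

lemma inf_eq_bot_of_ne {x y : Projectivization K V} (h : x ≠ y) :
    x.submodule ⊓ y.submodule = ⊥ := by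
  by_contra hb
  haveI : FiniteDimensional K ↥(x.submodule ⊓ y.submodule) :=
    Submodule.finiteDimensional_inf_left _ _
  have hne : finrank K ↥(x.submodule ⊓ y.submodule) ≠ 0 := by
    simpa [Submodule.finrank_eq_zero] using hb
  have h2 : x.submodule ⊓ y.submodule = x.submodule := by
    apply Submodule.eq_of_le_of_finrank_le inf_le_left
    rw [x.finrank_submodule]; omega
  exact h (eq_of_submodule_le (h2 ▸ inf_le_right))

lemma finrank_sup_of_ne {x y : Projectivization K V} (h : x ≠ y) :
    finrank K (x.submodule ⊔ y.submodule : Submodule K V) = 2 := by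
  have := Submodule.finrank_sup_add_finrank_inf_eq x.submodule y.submodule
  rw [inf_eq_bot_of_ne h, finrank_bot, x.finrank_submodule, y.finrank_submodule] at this
  omega

lemma line_eq_of_two_mem {s : Set (Projectivization K V)} (hs : s ∈ projLines K V)
    {u v : Projectivization K V} (hu : u ∈ s) (hv : v ∈ s) (huv : u ≠ v) :
    s = projLineThrough u v := by
  obtain ⟨x, y, hxy, rfl⟩ := hs
  have key : u.submodule ⊔ v.submodule = x.submodule ⊔ y.submodule := by
    apply Submodule.eq_of_le_of_finrank_le (sup_le hu hv)
    rw [finrank_sup_of_ne huv, finrank_sup_of_ne hxy]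
  unfold projLineThrough
  rw [key]

lemma plt_mem_projLines {x y : Projectivization K V} (h : x ≠ y) :
    projLineThrough x y ∈ projLines K V := ⟨x, y, h, rfl⟩

/-- Third point on a projective line. -/
lemma exists_third_point {x y : Projectivization K V} (h : x ≠ y) :
    ∃ z ∈ projLineThrough x y, z ≠ x ∧ z ≠ y := by
  have hxmem : x.rep ∈ x.submodule := x.submodule_eq ▸ Submodule.mem_span_singleton_self _
  have hymem : y.rep ∈ y.submodule := y.submodule_eq ▸ Submodule.mem_span_singleton_self _
  have hab : x.rep + y.rep ≠ 0 := by
    intro h0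
    apply h
    apply eq_of_submodule_le
    rw [x.submodule_eq, y.submodule_eq, ← (neg_eq_of_add_eq_zero_right h0),
      ← neg_one_smul K, Submodule.span_singleton_smul_eq (by norm_num : IsUnit (-1 : K))]
  refine ⟨Projectivization.mk K (x.rep + y.rep) hab, ?_, ?_, ?_⟩
  · rw [mem_plt, Projectivization.submodule_mk, Submodule.span_singleton_le_iff_mem]
    exact Submodule.add_mem_sup hxmem hymem
  · intro hzx
    apply h.symm
    apply eq_of_submodule_le
    have h1 : (Projectivization.mk K (x.rep + y.rep) hab).submodule = x.submodule := by
      rw [hzx]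
    rw [Projectivization.submodule_mk] at h1
    have hsum : x.rep + y.rep ∈ x.submodule := h1 ▸ Submodule.mem_span_singleton_self _
    have : y.rep ∈ x.submodule := by
      have := Submodule.sub_mem _ hsum hxmem; simpa using this
    rw [y.submodule_eq, Submodule.span_singleton_le_iff_mem]
    exact this
  · intro hzy
    apply h
    apply eq_of_submodule_le
    have h1 : (Projectivization.mk K (x.rep + y.rep) hab).submodule = y.submodule := by
      rw [hzy]
    rw [Projectivization.submodule_mk] at h1
    have hsum : x.rep + y.rep ∈ y.submodule := h1 ▸ Submodule.mem_span_singleton_self _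
    have : x.rep ∈ y.submodule := by
      have := Submodule.sub_mem _ hsum hymem; simpa using this
    rw [x.submodule_eq, Submodule.span_singleton_le_iff_mem]
    exact this

end Projective2

lemma mem_lineThru_left {L : Set (Set P)} {u v : P} (hc : Collin L u v) :
    u ∈ lineThru L u v := by
  obtain ⟨g, hg, hug, hvg⟩ := hc
  exact mem_biUnion (by exact ⟨hg, hug, hvg⟩) hug

lemma mem_lineThru_right {L : Set (Set P)} {u v : P} (hc : Collin L u v) :
    v ∈ lineThru L u v := by
  obtain ⟨g, hg, hug, hvg⟩ := hc
  exact mem_biUnion (by exact ⟨hg, hug, hvg⟩) hvg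

lemma sJoin_pair_eq (L : Set (Set P)) {u v : P} (huv : u ≠ v) (hc : Collin L u v) :
    sJoin L {u} {v} = lineThru L u v := by
  unfold sJoin
  rw [Set.biUnion_singleton, Set.biUnion_singleton]
  apply subset_antisymm
  · exact union_subset (union_subset (singleton_subset_iff.mpr (mem_lineThru_left hc))
      (singleton_subset_iff.mpr (mem_lineThru_right hc)))
      (iUnion_subset fun _ => subset_rfl)
  · exact (subset_iUnion (fun _ : (u ≠ v ∧ Collin L u v) => lineThru L u v)
      ⟨huv, hc⟩).trans subset_union_right

/-- Uniqueness of the line through two distinct points: `lineThru` is `h` itself. -/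
lemma lineThru_eq_of_unique {L : Set (Set P)} {u v : P} {h : Set P}
    (hh : h ∈ L) (hu : u ∈ h) (hv : v ∈ h)
    (huniq : ∀ g ∈ L, u ∈ g → v ∈ g → g = h) :
    lineThru L u v = h := by
  apply subset_antisymm
  · refine iUnion₂_subset fun g hg => ?_
    rw [huniq g hg.1 hg.2.1 hg.2.2]
  · exact subset_biUnion_of_mem (u := fun g => g)
      (show h ∈ {g ∈ L | u ∈ g ∧ v ∈ g} from ⟨hh, hu, hv⟩)

section TwoSpaces

variable {K V₁ V₂ : Type*} [Field K] [AddCommGroup V₁] [Module K V₁]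
  [AddCommGroup V₂] [Module K V₂]

local notation "L₁₂" => prodLines (projLines K V₁) (projLines K V₂)

lemma prodLine_unique {h h' : Set (Projectivization K V₁ × Projectivization K V₂)}
    (hh : h ∈ L₁₂) (hh' : h' ∈ L₁₂)
    {u v : Projectivization K V₁ × Projectivization K V₂}
    (hu : u ∈ h) (hv : v ∈ h) (hu' : u ∈ h') (hv' : v ∈ h') (huv : u ≠ v) : h = h' := by
  rcases hh with ⟨X, g₂, hg₂, rfl⟩ | ⟨g₁, hg₁, X, rfl⟩ <;>
    rcases hh' with ⟨X', g₂', hg₂', rfl⟩ | ⟨g₁', hg₁', X', rfl⟩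
  · obtain ⟨hu1, hu2⟩ := hu; obtain ⟨hv1, hv2⟩ := hv
    obtain ⟨hu1', hu2'⟩ := hu'
    simp only [mem_singleton_iff] at hu1 hv1 hu1'
    have h2 : u.2 ≠ v.2 := fun h2 => huv (Prod.ext (hu1.trans hv1.symm) h2)
    have : g₂ = g₂' := by
      rw [line_eq_of_two_mem hg₂ hu2 hv2 h2, line_eq_of_two_mem hg₂' hu2' hv'.2 h2]
    rw [this, show X = X' from hu1.symm.trans hu1']
  · obtain ⟨hu1, hu2⟩ := hu; obtain ⟨hv1, hv2⟩ := hv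
    obtain ⟨hu1', hu2'⟩ := hu'; obtain ⟨hv1', hv2'⟩ := hv'
    simp only [mem_singleton_iff] at hu1 hv1 hu2' hv2'
    exact absurd (Prod.ext (hu1.trans hv1.symm) (hu2'.trans hv2'.symm)) huv
  · obtain ⟨hu1, hu2⟩ := hu; obtain ⟨hv1, hv2⟩ := hv
    obtain ⟨hu1', hu2'⟩ := hu'; obtain ⟨hv1', hv2'⟩ := hv'
    simp only [mem_singleton_iff] at hu2 hv2 hu1' hv1'
    exact absurd (Prod.ext (hu1'.trans hv1'.symm) (hu2.trans hv2.symm)) huv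
  · obtain ⟨hu1, hu2⟩ := hu; obtain ⟨hv1, hv2⟩ := hv
    obtain ⟨hu1', hu2'⟩ := hu'
    simp only [mem_singleton_iff] at hu2 hv2 hu2'
    have h1 : u.1 ≠ v.1 := fun h1 => huv (Prod.ext h1 (hu2.trans hv2.symm))
    have : g₁ = g₁' := by
      rw [line_eq_of_two_mem hg₁ hu1 hv1 h1, line_eq_of_two_mem hg₁' hu1' hv'.1 h1]
    rw [this, show X = X' from hu2.symm.trans hu2']

lemma lineThru_prod_eq {h : Set (Projectivization K V₁ × Projectivization K V₂)}
    (hh : h ∈ L₁₂) {u v : Projectivization K V₁ × Projectivization K V₂}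
    (hu : u ∈ h) (hv : v ∈ h) (huv : u ≠ v) :
    lineThru L₁₂ u v = h :=
  lineThru_eq_of_unique hh hu hv fun g hg hug hvg =>
    prodLine_unique hg hh hug hvg hu hv huv

end TwoSpaces

section ProjSide

variable {K V : Type*} [Field K] [AddCommGroup V] [Module K V]

lemma lineThru_proj_eq {p q : Projectivization K V} (hpq : p ≠ q) :
    lineThru (projLines K V) p q = projLineThrough p q :=
  lineThru_eq_of_unique (plt_mem_projLines hpq) (left_mem_plt p q) (right_mem_plt p q)
    fun g hg hug hvg => line_eq_of_two_mem hg hug hvg hpq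

lemma sJoin_proj_eq {p q : Projectivization K V} (hpq : p ≠ q) :
    sJoin (projLines K V) {p} {q} = projLineThrough p q := by
  rw [sJoin_pair_eq _ hpq ⟨projLineThrough p q, plt_mem_projLines hpq,
    left_mem_plt p q, right_mem_plt p q⟩, lineThru_proj_eq hpq]

end ProjSide

lemma ptImg_total {Q : Type*} (γ : P → Q) (u : P) :
    ptImg (fun p => some (γ p)) u = {γ u} := by
  ext y; simp [ptImg, eq_comm]

lemma mapSet_total {Q : Type*} (γ : P → Q) (M : Set P) :
    mapSet (fun p => some (γ p)) M = γ '' M := by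
  ext y; simp [mapSet, ptImg, eq_comm, Set.image]



section ImageLine

variable {K V₁ V₂ W : Type*} [Field K] [AddCommGroup V₁] [Module K V₁]
  [AddCommGroup V₂] [Module K V₂] [AddCommGroup W] [Module K W]

/-- The image of a line of the product under an injective map satisfying (L1) is a
full projective line. -/
lemma image_line
    (γ : Projectivization K V₁ × Projectivization K V₂ → Projectivization K W)
    (hL1 : ∀ U V', Collin (prodLines (projLines K V₁) (projLines K V₂)) U V' →
      mapSet (fun p => some (γ p))
          (sJoin (prodLines (projLines K V₁) (projLines K V₂)) {U} {V'}) =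
        sJoin (projLines K W) (ptImg (fun p => some (γ p)) U)
          (ptImg (fun p => some (γ p)) V'))
    (hinj : Function.Injective γ)
    {h : Set (Projectivization K V₁ × Projectivization K V₂)}
    (hh : h ∈ prodLines (projLines K V₁) (projLines K V₂))
    {u v : Projectivization K V₁ × Projectivization K V₂}
    (hu : u ∈ h) (hv : v ∈ h) (huv : u ≠ v) :
    γ '' h = projLineThrough (γ u) (γ v) := by
  have hc : Collin (prodLines (projLines K V₁) (projLines K V₂)) u v := ⟨h, hh, hu, hv⟩
  have key := hL1 u v hc
  rw [sJoin_pair_eq _ huv hc, lineThru_prod_eq hh hu hv huv, mapSet_total,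
    ptImg_total, ptImg_total, sJoin_proj_eq (fun he => huv (hinj he))] at key
  exact key

end ImageLine

section Transfer

variable {K V : Type*} [Field K] [AddCommGroup V] [Module K V] [FiniteDimensional K V]

lemma rep_mem_submodule (x : Projectivization K V) : x.rep ∈ x.submodule := by
  rw [x.submodule_eq]; exact Submodule.mem_span_singleton_self _

/-- The key linear-algebra lemma: given subspaces `A`, `B` with trivial intersection
and a `2`-dimensional subspace `C ≤ A ⊔ B` meeting `B` trivially, there is an
endomorphism `T` sending `a` to `b` whenever `a + b ∈ C` (`a ∈ A`, `b ∈ B`);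
`C` is the graph of the corresponding map `A → B`. -/
lemma exists_transfer {A B C : Submodule K V}
    (hAB : A ⊓ B = ⊥) (hCB : C ⊓ B = ⊥) (hCAB : C ≤ A ⊔ B)
    (frA : finrank K ↥A = 2) (frC : finrank K ↥C = 2) :
    ∃ T : V →ₗ[K] V,
      ∀ a xb, (ha : a ∈ A) → xb ∈ B → a + xb ∈ C → T a = xb := by
  obtain ⟨W₀, hW₀⟩ := Submodule.exists_isCompl (A ⊔ B)
  have hSB : (B ⊔ W₀) ⊓ (A ⊔ B) = B := by
    rw [sup_inf_assoc_of_le _ le_sup_right, disjoint_iff.mp hW₀.disjoint.symm, sup_bot_eq]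
  have hA_le : A ⊓ (B ⊔ W₀) ≤ B := by
    calc A ⊓ (B ⊔ W₀) ≤ (A ⊔ B) ⊓ (B ⊔ W₀) := inf_le_inf_right _ le_sup_left
      _ = B := by rw [inf_comm]; exact hSB
  have hcomplA : IsCompl A (B ⊔ W₀) := by
    constructor
    · rw [disjoint_iff]
      have h2 : A ⊓ (B ⊔ W₀) ≤ A ⊓ B := le_inf inf_le_left hA_le
      rw [hAB] at h2
      exact le_bot_iff.mp h2
    · rw [codisjoint_iff, ← sup_assoc, codisjoint_iff.mp hW₀.codisjoint]
  have hSA : (A ⊔ W₀) ⊓ (A ⊔ B) = A := by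
    rw [sup_inf_assoc_of_le _ le_sup_left, disjoint_iff.mp hW₀.disjoint.symm, sup_bot_eq]
  have hcomplB : IsCompl B (A ⊔ W₀) := by
    constructor
    · rw [disjoint_iff]
      have h2 : B ⊓ (A ⊔ W₀) ≤ B ⊓ A := by
        refine le_inf inf_le_left ?_
        calc B ⊓ (A ⊔ W₀) ≤ (A ⊔ B) ⊓ (A ⊔ W₀) := inf_le_inf_right _ le_sup_right
          _ = A := by rw [inf_comm]; exact hSA
      rw [inf_comm B A, hAB] at h2
      exact le_bot_iff.mp h2
    · rw [codisjoint_iff, ← sup_assoc, sup_comm B A, codisjoint_iff.mp hW₀.codisjoint]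
  set π := A.projectionOnto (B ⊔ W₀) hcomplA with hπdef
  set πB := B.projectionOnto (A ⊔ W₀) hcomplB with hπBdef
  set e : ↥C →ₗ[K] ↥A := π ∘ₗ C.subtype with hedef
  have einj : Function.Injective e := by
    rw [← LinearMap.ker_eq_bot]
    rw [Submodule.eq_bot_iff]
    rintro ⟨c, hcC⟩ hc
    have h0 : π c = 0 := hc
    have hcB : c ∈ B := by
      have h1 : c ∈ B ⊔ W₀ := (Submodule.linearProjOfIsCompl_apply_eq_zero_iff hcomplA).mp h0
      have h2 : c ∈ (B ⊔ W₀) ⊓ (A ⊔ B) := ⟨h1, hCAB hcC⟩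
      rw [hSB] at h2
      exact h2
    have : c ∈ C ⊓ B := ⟨hcC, hcB⟩
    rw [hCB] at this
    exact Subtype.ext this
  have esurj : Function.Surjective e :=
    (LinearMap.injective_iff_surjective_of_finrank_eq_finrank
      (by rw [frA, frC])).mp einj
  set eE := LinearEquiv.ofBijective e ⟨einj, esurj⟩ with heE
  refine ⟨B.subtype ∘ₗ πB ∘ₗ C.subtype ∘ₗ (eE.symm : ↥A →ₗ[K] ↥C) ∘ₗ π, ?_⟩
  intro a xb ha hb hc
  have hπa : π a = ⟨a, ha⟩ := Submodule.linearProjOfIsCompl_apply_left hcomplA ⟨a, ha⟩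
  have hπc : π (a + xb) = ⟨a, ha⟩ := by
    rw [map_add, Submodule.linearProjOfIsCompl_apply_right' hcomplA
      (Submodule.mem_sup_left hb), add_zero]
    exact hπa
  have hec : e ⟨a + xb, hc⟩ = ⟨a, ha⟩ := hπc
  have hsymm : eE.symm ⟨a, ha⟩ = ⟨a + xb, hc⟩ := by
    rw [LinearEquiv.symm_apply_eq]
    exact hec.symm
  have hπBc : πB (a + xb) = ⟨xb, hb⟩ := by
    rw [map_add, Submodule.linearProjOfIsCompl_apply_right' hcomplB
      (Submodule.mem_sup_left ha), zero_add]
    exact Submodule.linearProjOfIsCompl_apply_left hcomplB ⟨xb, hb⟩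
  show B.subtype (πB (C.subtype (eE.symm (π a)))) = xb
  rw [hπa, hsymm]
  show (πB (a + xb) : V) = xb
  rw [hπBc]

end Transfer


end Helpers

end Segre

open Segre Set in
/-- Proposition `proiett`: the map `(P, P₁*)γ ↦ (P, P₂*)γ` between
the lines `g₁ = (g × {P₁*})γ` and `g₂ = (g × {P₂*})γ` is a projectivity (it is
induced by a linear map carrying the 2-dimensional subspace of `g₁` onto that
of `g₂`). -/
theorem statement_6 (F : Type*) [Field F] (n m : ℕ) (hn : 2 ≤ n) (hm : 1 ≤ m)
    (γ : PGPt F n × PGPt F m → PGPt F (n * m + n + m))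
    (hγ : IsRegularEmbedding F n m γ)
    (g : Set (PGPt F n)) (hg : g ∈ PGLines F n)
    (P₁ P₂ : PGPt F m) (hP : P₁ ≠ P₂) :
    γ '' (g ×ˢ ({P₁} : Set (PGPt F m))) ∈ PGLines F (n * m + n + m) ∧
    γ '' (g ×ˢ ({P₂} : Set (PGPt F m))) ∈ PGLines F (n * m + n + m) ∧
    ∃ T : (Fin (n * m + n + m + 1) → F) →ₗ[F] (Fin (n * m + n + m + 1) → F),
      Submodule.map T (spanOf (γ '' (g ×ˢ ({P₁} : Set (PGPt F m)))))
        = spanOf (γ '' (g ×ˢ ({P₂} : Set (PGPt F m)))) ∧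
      ∀ P ∈ g, Submodule.map T ((γ (P, P₁)).submodule) = (γ (P, P₂)).submodule := by
  classical
  obtain ⟨⟨hL1, _hL2⟩, hinj, _hreg⟩ := hγ
  -- two distinct points on g
  obtain ⟨X, Y, hXY, hgeq⟩ := hg
  have hX : X ∈ g := by rw [hgeq]; exact left_mem_plt X Y
  have hY : Y ∈ g := by rw [hgeq]; exact right_mem_plt X Y
  -- the line ℓ = P₁P₂ of ℙ₂ and a third point Q₃ on it
  obtain ⟨Q₃, hQmem, hQ1, hQ2⟩ := exists_third_point hP
  have hℓmem : projLineThrough P₁ P₂ ∈ PGLines F m := plt_mem_projLines hP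
  -- images of horizontal lines are full lines
  have img : ∀ R : PGPt F m, γ '' (g ×ˢ ({R} : Set (PGPt F m)))
      = projLineThrough (γ (X, R)) (γ (Y, R)) := by
    intro R
    refine image_line γ hL1 hinj (Or.inr ⟨g, ⟨X, Y, hXY, hgeq⟩, R, rfl⟩)
      ⟨hX, rfl⟩ ⟨hY, rfl⟩ ?_
    exact fun he => hXY (congrArg Prod.fst he)
  -- images of vertical lines are full lines
  have imgv : ∀ P' : PGPt F n, γ '' (({P'} : Set (PGPt F n)) ×ˢ projLineThrough P₁ P₂)
      = projLineThrough (γ (P', P₁)) (γ (P', P₂)) := by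
    intro P'
    refine image_line γ hL1 hinj (Or.inl ⟨P', projLineThrough P₁ P₂, hℓmem, rfl⟩)
      ⟨rfl, left_mem_plt P₁ P₂⟩ ⟨rfl, right_mem_plt P₁ P₂⟩ ?_
    exact fun he => hP (congrArg Prod.snd he)
  have hne : ∀ R : PGPt F m, γ (X, R) ≠ γ (Y, R) := fun R he =>
    hXY (congrArg Prod.fst (hinj he))
  set A := (γ (X, P₁)).submodule ⊔ (γ (Y, P₁)).submodule with hA
  set B := (γ (X, P₂)).submodule ⊔ (γ (Y, P₂)).submodule with hB
  set C := (γ (X, Q₃)).submodule ⊔ (γ (Y, Q₃)).submodule with hC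
  have memA : ∀ R : PGPt F m, ∀ P' ∈ g, (γ (P', R)).submodule ≤
      (γ (X, R)).submodule ⊔ (γ (Y, R)).submodule := by
    intro R P' hP'
    have hmem : γ (P', R) ∈ γ '' (g ×ˢ ({R} : Set (PGPt F m))) :=
      ⟨(P', R), ⟨hP', rfl⟩, rfl⟩
    rw [img R] at hmem
    exact hmem
  have disj : ∀ R S : PGPt F m, R ≠ S → ∀ w : Fin (n * m + n + m + 1) → F,
      w ∈ ((γ (X, R)).submodule ⊔ (γ (Y, R)).submodule) →
      w ∈ ((γ (X, S)).submodule ⊔ (γ (Y, S)).submodule) → w = 0 := by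
    intro R S hRS w hwR hwS
    by_contra hw0
    have hz : Projectivization.mk F w hw0 ∈ γ '' (g ×ˢ ({R} : Set (PGPt F m))) := by
      rw [img R, mem_plt, Projectivization.submodule_mk,
        Submodule.span_singleton_le_iff_mem]
      exact hwR
    have hz' : Projectivization.mk F w hw0 ∈ γ '' (g ×ˢ ({S} : Set (PGPt F m))) := by
      rw [img S, mem_plt, Projectivization.submodule_mk,
        Submodule.span_singleton_le_iff_mem]
      exact hwS
    obtain ⟨p, hp, hpe⟩ := hz
    obtain ⟨p', hp', hpe'⟩ := hz'
    have hpp : p = p' := hinj (hpe.trans hpe'.symm)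
    have e1 : p.2 = R := hp.2
    have e2 : p'.2 = S := hp'.2
    exact hRS (by rw [← e1, ← e2, hpp])
  have hAB : A ⊓ B = ⊥ := by
    rw [Submodule.eq_bot_iff]
    exact fun w hw => disj P₁ P₂ hP w hw.1 hw.2
  have hCA : C ⊓ A = ⊥ := by
    rw [Submodule.eq_bot_iff]
    exact fun w hw => disj Q₃ P₁ hQ1 w hw.1 hw.2
  have hCB : C ⊓ B = ⊥ := by
    rw [Submodule.eq_bot_iff]
    exact fun w hw => disj Q₃ P₂ hQ2 w hw.1 hw.2
  have frA : Module.finrank F ↥A = 2 := finrank_sup_of_ne (hne P₁)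
  have frC : Module.finrank F ↥C = 2 := finrank_sup_of_ne (hne Q₃)
  have hD : ∀ P' ∈ g, (γ (P', Q₃)).submodule ≤
      (γ (P', P₁)).submodule ⊔ (γ (P', P₂)).submodule := by
    intro P' hP'
    have hmem : γ (P', Q₃) ∈ γ '' (({P'} : Set (PGPt F n)) ×ˢ projLineThrough P₁ P₂) :=
      ⟨(P', Q₃), ⟨rfl, hQmem⟩, rfl⟩
    rw [imgv P'] at hmem
    exact hmem
  have hCAB : C ≤ A ⊔ B := by
    rw [hC]
    apply sup_le
    · exact (hD X hX).trans (sup_le_sup le_sup_left le_sup_left)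
    · exact (hD Y hY).trans (sup_le_sup le_sup_right le_sup_right)
  obtain ⟨T, hT⟩ := exists_transfer hAB hCB hCAB frA frC
  -- the pointwise property
  have main : ∀ P' ∈ g,
      Submodule.map T (γ (P', P₁)).submodule = (γ (P', P₂)).submodule := by
    intro P' hP'
    have haA : (γ (P', P₁)).submodule ≤ A := memA P₁ P' hP'
    have hbB : (γ (P', P₂)).submodule ≤ B := memA P₂ P' hP'
    have hqC : (γ (P', Q₃)).submodule ≤ C := memA Q₃ P' hP'
    have hcAB : (γ (P', Q₃)).rep ∈
        (γ (P', P₁)).submodule ⊔ (γ (P', P₂)).submodule :=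
      hD P' hP' (rep_mem_submodule _)
    obtain ⟨xa, hxa, xb, hxb, hsum⟩ := Submodule.mem_sup.mp hcAB
    have hxa0 : xa ≠ 0 := by
      intro h0
      have hc0 : (γ (P', Q₃)).rep ∈ C ⊓ B := by
        refine ⟨hqC (rep_mem_submodule _), ?_⟩
        rw [← hsum, h0, zero_add]
        exact hbB hxb
      rw [hCB] at hc0
      exact (γ (P', Q₃)).rep_nonzero hc0
    have hxb0 : xb ≠ 0 := by
      intro h0
      have hc0 : (γ (P', Q₃)).rep ∈ C ⊓ A := by
        refine ⟨hqC (rep_mem_submodule _), ?_⟩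
        rw [← hsum, h0, add_zero]
        exact haA hxa
      rw [hCA] at hc0
      exact (γ (P', Q₃)).rep_nonzero hc0
    -- xa spans (γ (P', P₁)).submodule, xb spans (γ (P', P₂)).submodule
    have hspa : Submodule.span F {xa} = (γ (P', P₁)).submodule := by
      apply Submodule.eq_of_le_of_finrank_le
      · rw [Submodule.span_singleton_le_iff_mem]; exact hxa
      · rw [Projectivization.finrank_submodule, finrank_span_singleton hxa0]
    have hspb : Submodule.span F {xb} = (γ (P', P₂)).submodule := by
      apply Submodule.eq_of_le_of_finrank_le
      · rw [Submodule.span_singleton_le_iff_mem]; exact hxb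
      · rw [Projectivization.finrank_submodule, finrank_span_singleton hxb0]
    have hTxa : T xa = xb := by
      refine hT xa xb (haA hxa) (hbB hxb) ?_
      rw [hsum]
      exact hqC (rep_mem_submodule _)
    rw [← hspa, ← hspb, Submodule.map_span, Set.image_singleton, hTxa]
  refine ⟨?_, ?_, T, ?_, main⟩
  · rw [img P₁]
    exact plt_mem_projLines (hne P₁)
  · rw [img P₂]
    exact plt_mem_projLines (hne P₂)
  · rw [img P₁, img P₂, spanOf_plt, spanOf_plt, Submodule.map_sup, main X hX, main Y hY]
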